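/- If a function f : (0, ∞) → [0, ∞) satisfies max{f(x+y), a} = max{f(x), f(y)} for all x, y > 0, where a ≥ 0 is a constant, then f(z) = f(1) for every z > 0, and f(1) ≥ a. -/
import Mathlib


/-- Lemma 2.1 (`L_∞` Cauchy functional equation): if `f : (0,∞) → [0,∞)` satisfies
`max (f (x+y)) a = max (f x) (f y)` for all `x, y > 0`, where `a ≥ 0`, then
`f z = f 1` for all `z > 0` and `f 1 ≥ a`. -/
theorem linfty_cauchy_functional_equation (f : ℝ → ℝ) (a : ℝ) (ha : 0 ≤ a)
    (hnonneg : ∀ x : ℝ, 0 < x → 0 ≤ f x)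
    (hfe : ∀ x y : ℝ, 0 < x → 0 < y → max (f (x + y)) a = max (f x) (f y)) :
    (∀ z : ℝ, 0 < z → f z = f 1) ∧ a ≤ f 1 := by
  have hge : ∀ x : ℝ, 0 < x → a ≤ f x := by
    intro x hx
    have h := hfe x x hx hx
    simp only [max_self] at h
    calc a ≤ max (f (x + x)) a := le_max_right _ _
      _ = f x := h
  have h2 : ∀ x y : ℝ, 0 < x → 0 < y → f (x + y) = max (f x) (f y) := by
    intro x y hx hy
    have := hfe x y hx hy
    rwa [max_eq_left (hge _ (by linarith))] at this
  have hmono : ∀ x y : ℝ, 0 < x → x ≤ y → f x ≤ f y := by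
    intro x y hx hxy
    rcases eq_or_lt_of_le hxy with rfl | hlt
    · exact le_rfl
    · have : f y = max (f x) (f (y - x)) := by
        have := h2 x (y - x) hx (by linarith)
        rwa [add_sub_cancel] at this
      rw [this]; exact le_max_left _ _
  have hdouble : ∀ x : ℝ, 0 < x → f (2 * x) = f x := by
    intro x hx
    have := h2 x x hx hx
    rw [max_self] at this
    rw [two_mul]; exact this
  have hpow : ∀ (n : ℕ) (x : ℝ), 0 < x → f ((2 : ℝ) ^ n * x) = f x := by
    intro n
    induction n with
    | zero => intro x hx; simp
    | succ n ih =>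
      intro x hx
      have h1 : (2 : ℝ) ^ (n + 1) * x = 2 ^ n * (2 * x) := by ring
      rw [h1, ih (2 * x) (by linarith), hdouble x hx]
  have key : ∀ z : ℝ, 0 < z → f z = f 1 := by
    intro z hz
    obtain ⟨n, hn⟩ := pow_unbounded_of_one_lt z (one_lt_two (α := ℝ))
    obtain ⟨m, hm⟩ := pow_unbounded_of_one_lt (1 / z) (one_lt_two (α := ℝ))
    have h1 : f z ≤ f 1 := by
      have := hmono z ((2 : ℝ) ^ n) hz hn.le
      have h2n : f ((2 : ℝ) ^ n) = f 1 := by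
        have := hpow n 1 one_pos; simpa using this
      linarith
    have h2' : f 1 ≤ f z := by
      have hzle : 1 ≤ (2 : ℝ) ^ m * z := by
        rw [div_lt_iff₀ hz] at hm
        linarith [hm]
      have := hmono 1 ((2 : ℝ) ^ m * z) one_pos hzle
      rw [hpow m z hz] at this
      exact this
    linarith
  exact ⟨key, hge 1 one_pos⟩
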